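/- Define g₂ : [0,1] → ℝ by g₂(0) = 2/3 and, for z ∈ (0,1], g₂(z) = (−z² + 6z − 3 + √(9−z)·(1−z)^{3/2}) / (2z). Then g₂ takes values in [0,1], and for every z ∈ [0,1] it satisfies the functional equation g₂(z) = 3 / (6 − z − g₂(z) − g₂(g₂(z))). -/
import Mathlib


namespace VEP

/-- The generating function `g₂` for the critical geometric model with uniform `{-1, 0, 1}`
displacements: `g₂(0) = 2/3` and for `z ≠ 0`,
`g₂(z) = (−z² + 6z − 3 + √(9−z)(1−z)^{3/2}) / (2z)`. -/
noncomputable def g2 (z : ℝ) : ℝ :=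
  if z = 0 then 2 / 3
  else (-z ^ 2 + 6 * z - 3 + Real.sqrt (9 - z) * (1 - z) ^ ((3 : ℝ) / 2)) / (2 * z)

/-- Rewrite the `rpow` expression as a single square root. -/
lemma sqrt_rpow_eq (z : ℝ) (hz : z ≤ 1) :
    Real.sqrt (9 - z) * (1 - z) ^ ((3 : ℝ) / 2) = Real.sqrt ((9 - z) * (1 - z) ^ 3) := by
  have h1 : (0 : ℝ) ≤ 1 - z := by linarith
  have h9 : (0 : ℝ) ≤ 9 - z := by linarith
  have : (1 - z) ^ ((3 : ℝ) / 2) = Real.sqrt ((1 - z) ^ 3) := by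
    rw [Real.sqrt_eq_rpow, ← Real.rpow_natCast (1 - z) 3, ← Real.rpow_mul h1]
    norm_num
  rw [this, ← Real.sqrt_mul h9]

lemma g2_eq (z : ℝ) (hz : z ≠ 0) (hz1 : z ≤ 1) :
    g2 z = (-z ^ 2 + 6 * z - 3 + Real.sqrt ((9 - z) * (1 - z) ^ 3)) / (2 * z) := by
  rw [g2, if_neg hz, sqrt_rpow_eq z hz1]

lemma sqrt_sq_eq (z : ℝ) (hz0 : 0 ≤ z) (hz1 : z ≤ 1) :
    (Real.sqrt ((9 - z) * (1 - z) ^ 3)) ^ 2 = (9 - z) * (1 - z) ^ 3 := by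
  apply Real.sq_sqrt
  have h1 : (0 : ℝ) ≤ 1 - z := by linarith
  exact mul_nonneg (by linarith) (pow_nonneg h1 3)

/-- Upper bound: `√((9−z)(1−z)³) ≤ (1−z)(3−z)`. -/
lemma sqrt_le (z : ℝ) (hz0 : 0 ≤ z) (hz1 : z ≤ 1) :
    Real.sqrt ((9 - z) * (1 - z) ^ 3) ≤ (1 - z) * (3 - z) := by
  have h1 : (0 : ℝ) ≤ 1 - z := by linarith
  have h2 : (0 : ℝ) ≤ (1 - z) * (3 - z) := by nlinarith
  have h3 : (9 - z) * (1 - z) ^ 3 ≤ ((1 - z) * (3 - z)) ^ 2 := by nlinarith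
  calc Real.sqrt ((9 - z) * (1 - z) ^ 3) ≤ Real.sqrt (((1 - z) * (3 - z)) ^ 2) :=
        Real.sqrt_le_sqrt h3
    _ = (1 - z) * (3 - z) := Real.sqrt_sq h2

/-- Lower bound: `(3−z²)·√((9−z)(1−z)³) ≥ (1−z)²(9+4z−z²)`. -/
lemma sqrt_ge (z : ℝ) (hz0 : 0 ≤ z) (hz1 : z ≤ 1) :
    (1 - z) ^ 2 * (9 + 4 * z - z ^ 2) ≤ (3 - z ^ 2) * Real.sqrt ((9 - z) * (1 - z) ^ 3) := by
  have h1 : (0 : ℝ) ≤ 1 - z := by linarith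
  have h3 : (0 : ℝ) < 3 - z ^ 2 := by nlinarith
  have hs : (0 : ℝ) ≤ Real.sqrt ((9 - z) * (1 - z) ^ 3) := Real.sqrt_nonneg _
  have hsq := sqrt_sq_eq z hz0 hz1
  set s := Real.sqrt ((9 - z) * (1 - z) ^ 3) with hsdef
  have hA : (0 : ℝ) ≤ (1 - z) ^ 2 * (9 + 4 * z - z ^ 2) := by nlinarith
  have hB : (0 : ℝ) ≤ (3 - z ^ 2) * s := mul_nonneg h3.le hs
  have key : ((3 - z ^ 2) * s) ^ 2 = (3 - z ^ 2) ^ 2 * ((9 - z) * (1 - z) ^ 3) := by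
    rw [mul_pow, hsq]
  have hnn : (0 : ℝ) ≤ 4 * z ^ 2 * (5 + 3 * z) * (1 - z) ^ 3 := by
    apply mul_nonneg (by nlinarith) (pow_nonneg h1 3)
  have hsqle : ((1 - z) ^ 2 * (9 + 4 * z - z ^ 2)) ^ 2 ≤ ((3 - z ^ 2) * s) ^ 2 := by
    nlinarith [key, hnn]
  calc (1 - z) ^ 2 * (9 + 4 * z - z ^ 2)
      = Real.sqrt (((1 - z) ^ 2 * (9 + 4 * z - z ^ 2)) ^ 2) := (Real.sqrt_sq hA).symm
    _ ≤ Real.sqrt (((3 - z ^ 2) * s) ^ 2) := Real.sqrt_le_sqrt hsqle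
    _ = (3 - z ^ 2) * s := Real.sqrt_sq hB

/-- `g2 z ≤ 1` on `[0,1]`. -/
lemma g2_le_one (z : ℝ) (hz0 : 0 ≤ z) (hz1 : z ≤ 1) : g2 z ≤ 1 := by
  rcases eq_or_ne z 0 with rfl | hz
  · rw [g2]; norm_num
  · have hzpos : 0 < z := lt_of_le_of_ne hz0 (Ne.symm hz)
    rw [g2_eq z hz hz1]
    rw [div_le_one (by linarith)]
    have := sqrt_le z hz0 hz1
    nlinarith

/-- `2/(3−z²) ≤ g2 z` on `(0,1]`. -/
lemma g2_ge (z : ℝ) (hz0 : 0 < z) (hz1 : z ≤ 1) : 2 / (3 - z ^ 2) ≤ g2 z := by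
  have h3 : (0 : ℝ) < 3 - z ^ 2 := by nlinarith
  rw [g2_eq z (ne_of_gt hz0) hz1, div_le_div_iff₀ h3 (by linarith)]
  have := sqrt_ge z hz0.le hz1
  nlinarith

lemma g2_mem (z : ℝ) (hz : z ∈ Set.Icc (0 : ℝ) 1) : g2 z ∈ Set.Icc (0 : ℝ) 1 := by
  obtain ⟨hz0, hz1⟩ := hz
  refine ⟨?_, g2_le_one z hz0 hz1⟩
  rcases eq_or_ne z 0 with rfl | hz
  · rw [g2]; norm_num
  · have hzpos : 0 < z := lt_of_le_of_ne hz0 (Ne.symm hz)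
    have h3 : (0 : ℝ) < 3 - z ^ 2 := by nlinarith
    have := g2_ge z hzpos hz1
    have : (0 : ℝ) < 2 / (3 - z ^ 2) := by positivity
    linarith [g2_ge z hzpos hz1]

lemma g2_pos (z : ℝ) (hz0 : 0 < z) (hz1 : z ≤ 1) : 2 / 3 ≤ g2 z := by
  have h3 : (0 : ℝ) < 3 - z ^ 2 := by nlinarith
  have h1 : (2 : ℝ) / 3 ≤ 2 / (3 - z ^ 2) := by
    rw [div_le_div_iff₀ (by norm_num) h3]; nlinarith
  linarith [g2_ge z hz0 hz1]

/-- Value at `2/3`. -/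
lemma g2_two_thirds : g2 (2 / 3) = 5 / 6 := by
  have h : g2 (2/3) = (-(2/3:ℝ) ^ 2 + 6 * (2/3) - 3 + Real.sqrt ((9 - 2/3) * (1 - 2/3) ^ 3)) / (2 * (2/3)) :=
    g2_eq (2/3) (by norm_num) (by norm_num)
  have hs : Real.sqrt ((9 - 2/3 : ℝ) * (1 - 2/3) ^ 3) = 5 / 9 := by
    rw [show ((9 - 2/3 : ℝ) * (1 - 2/3) ^ 3) = (5/9 : ℝ) ^ 2 by norm_num]
    exact Real.sqrt_sq (by norm_num)
  rw [h, hs]; norm_num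

lemma g2_one : g2 1 = 1 := by
  have h : g2 1 = (-(1:ℝ) ^ 2 + 6 * 1 - 3 + Real.sqrt ((9 - 1) * (1 - 1) ^ 3)) / (2 * 1) :=
    g2_eq 1 (by norm_num) (by norm_num)
  rw [h]; norm_num

/-- The functional equation for `z ∈ (0,1]`. -/
lemma funEq_pos (z : ℝ) (hz0 : 0 < z) (hz1 : z ≤ 1) :
    g2 z = 3 / (6 - z - g2 z - g2 (g2 z)) := by
  set w := g2 z with hw
  have hwmem := g2_mem z ⟨hz0.le, hz1⟩
  have hw1 : w ≤ 1 := hwmem.2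
  have hwlb : 2 / 3 ≤ w := g2_pos z hz0 hz1
  have hwpos : (0 : ℝ) < w := by linarith
  have h3 : (0 : ℝ) < 3 - z ^ 2 := by nlinarith
  -- the defining equation for w
  have hSz := sqrt_sq_eq z hz0.le hz1
  have hdef : 2 * z * w = -z ^ 2 + 6 * z - 3 + Real.sqrt ((9 - z) * (1 - z) ^ 3) := by
    rw [hw, g2_eq z (ne_of_gt hz0) hz1]
    field_simp
  -- the symmetric polynomial relation (★)
  have hstar : z * w ^ 2 + (z ^ 2 - 6 * z + 3) * w + 3 * z - 2 = 0 := by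
    have h4 : 4 * z * (z * w ^ 2 + (z ^ 2 - 6 * z + 3) * w + 3 * z - 2) = 0 := by
      have hSz' : (2 * z * w + z ^ 2 - 6 * z + 3) ^ 2 = (9 - z) * (1 - z) ^ 3 := by
        have : 2 * z * w + z ^ 2 - 6 * z + 3 = Real.sqrt ((9 - z) * (1 - z) ^ 3) := by
          linarith
        rw [this]; exact hSz
      linear_combination hSz'
    have := mul_eq_zero.mp h4
    rcases this with h | h
    · exact absurd h (by positivity)
    · exact h
  -- T = 6w - 3 - w² - 2zw is nonnegative and T² = (9-w)(1-w)³
  set T := -w ^ 2 + 6 * w - 3 - 2 * z * w with hT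
  have hzT : z * T = (3 - z ^ 2) * w - 2 := by rw [hT]; linear_combination -hstar
  have hTnn : 0 ≤ T := by
    have hge : 2 / (3 - z ^ 2) ≤ w := g2_ge z hz0 hz1
    have : 2 ≤ (3 - z ^ 2) * w := by
      rw [div_le_iff₀ h3] at hge; linarith [hge]
    have hzTnn : 0 ≤ z * T := by rw [hzT]; linarith
    exact nonneg_of_mul_nonneg_right hzTnn hz0
  have hT2 : T ^ 2 = (9 - w) * (1 - w) ^ 3 := by
    rw [hT]; linear_combination (4 * w) * hstar
  have hSw : Real.sqrt ((9 - w) * (1 - w) ^ 3) = T := by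
    rw [← hT2, Real.sqrt_sq hTnn]
  -- evaluate g2 w
  have hg2w : g2 w = 6 - w - 3 / w - z := by
    rw [g2_eq w (ne_of_gt hwpos) hw1, hSw, hT]
    field_simp
    ring
  rw [hg2w]
  have hden : 6 - z - w - (6 - w - 3 / w - z) = 3 / w := by ring
  rw [hden]
  field_simp

/-- `g₂` maps `[0,1]` into `[0,1]` and satisfies `g₂(z) = 3 / (6 − z − g₂(z) − g₂(g₂(z)))`. -/
theorem g2_functional_equation :
    (∀ z ∈ Set.Icc (0 : ℝ) 1, g2 z ∈ Set.Icc (0 : ℝ) 1) ∧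
    (∀ z ∈ Set.Icc (0 : ℝ) 1, g2 z = 3 / (6 - z - g2 z - g2 (g2 z))) := by
  constructor
  · exact g2_mem
  · intro z hz
    rcases eq_or_ne z 0 with rfl | hne
    · have h0 : g2 0 = 2 / 3 := by rw [g2]; norm_num
      rw [h0, g2_two_thirds]
      norm_num
    · exact funEq_pos z (lt_of_le_of_ne hz.1 (Ne.symm hne)) hz.2

end VEP
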